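/- Let χ : ℝ × ℝ → ℝ be continuously differentiable with ∂χ/∂q₁(s, 0) = 0 and ∂χ/∂p₁(s, 0) = 1 for all s ∈ ℝ, let A : ℝ → ℝ be continuously differentiable, let F be a real inner product space, and let q̄₀, p̄₀ ∈ F with r₀² = ‖q̄₀‖² + ‖p̄₀‖². Then there exist differentiable functions q₁, p₁ : ℝ → ℝ and q̄, p̄ : ℝ → F satisfying for all t the Hamiltonian system q₁' = (∂χ/∂p₁)(q₁,p₁)·A(‖q̄‖²+‖p̄‖²), p₁' = −(∂χ/∂q₁)(q₁,p₁)·A(‖q̄‖²+‖p̄‖²), q̄' = 2χ(q₁,p₁)·A'(‖q̄‖²+‖p̄‖²)·p̄, p̄' = −2χ(q₁,p₁)·A'(‖q̄‖²+‖p̄‖²)·q̄, with initial conditions q₁(0) = p₁(0) = 0, q̄(0) = q̄₀, p̄(0) = p̄₀, and such that for all t: p₁(t) = 0, q₁(t) = t·A(r₀²), and ‖q̄(t)‖² + ‖p̄(t)‖² = r₀². -/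

import Mathlib

/-- Explicit solution of the Hamiltonian system for `H(q₁,p₁,q̄,p̄) = χ(q₁,p₁)·A(‖q̄‖²+‖p̄‖²)`
starting on the codimension-2 symplectic submanifold `{q₁ = p₁ = 0}`: there is a trajectory
with `p₁(t) = 0`, `q₁(t) = t·A(r₀²)` and `‖q̄(t)‖² + ‖p̄(t)‖²` constant equal to `r₀²`. -/
theorem flow_displaces_symplectic_submanifold
    {F : Type*} [NormedAddCommGroup F] [InnerProductSpace ℝ F]
    (χ : ℝ → ℝ → ℝ) (hχ : ContDiff ℝ 1 (fun z : ℝ × ℝ => χ z.1 z.2))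
    (hχq : ∀ s : ℝ, deriv (fun u => χ u 0) s = 0)
    (hχp : ∀ s : ℝ, deriv (fun v => χ s v) 0 = 1)
    (A : ℝ → ℝ) (hA : ContDiff ℝ 1 A)
    (q₀ p₀ : F) (r₀ : ℝ) (hr : r₀ ^ 2 = ‖q₀‖ ^ 2 + ‖p₀‖ ^ 2) :
    ∃ (q₁ p₁ : ℝ → ℝ) (qb pb : ℝ → F),
      (∀ t : ℝ, HasDerivAt q₁
        (deriv (fun v => χ (q₁ t) v) (p₁ t) * A (‖qb t‖ ^ 2 + ‖pb t‖ ^ 2)) t) ∧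
      (∀ t : ℝ, HasDerivAt p₁
        (-(deriv (fun u => χ u (p₁ t)) (q₁ t) * A (‖qb t‖ ^ 2 + ‖pb t‖ ^ 2))) t) ∧
      (∀ t : ℝ, HasDerivAt qb
        ((2 * χ (q₁ t) (p₁ t) * deriv A (‖qb t‖ ^ 2 + ‖pb t‖ ^ 2)) • pb t) t) ∧
      (∀ t : ℝ, HasDerivAt pb
        (-((2 * χ (q₁ t) (p₁ t) * deriv A (‖qb t‖ ^ 2 + ‖pb t‖ ^ 2)) • qb t)) t) ∧
      q₁ 0 = 0 ∧ p₁ 0 = 0 ∧ qb 0 = q₀ ∧ pb 0 = p₀ ∧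
      (∀ t : ℝ, p₁ t = 0) ∧ (∀ t : ℝ, q₁ t = t * A (r₀ ^ 2)) ∧
      (∀ t : ℝ, ‖qb t‖ ^ 2 + ‖pb t‖ ^ 2 = r₀ ^ 2) := by
  set a : ℝ := A (r₀ ^ 2) with ha
  set c : ℝ := deriv A (r₀ ^ 2) with hc
  have hχc : Continuous (fun z : ℝ × ℝ => χ z.1 z.2) := hχ.continuous
  set f : ℝ → ℝ := fun s => χ (s * a) 0 with hf
  have hfc : Continuous f := by
    have : Continuous (fun s : ℝ => ((s * a, 0) : ℝ × ℝ)) := by continuity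
    exact hχc.comp this
  set θ : ℝ → ℝ := fun t => 2 * c * ∫ s in (0:ℝ)..t, f s with hθ
  have hθd : ∀ t : ℝ, HasDerivAt θ (2 * c * f t) t := by
    intro t
    have hint : HasDerivAt (fun t => ∫ s in (0:ℝ)..t, f s) (f t) t := by
      refine intervalIntegral.integral_hasDerivAt_right
        (hfc.intervalIntegrable 0 t) ?_ hfc.continuousAt
      exact hfc.stronglyMeasurableAtFilter _ _
    simpa using hint.const_mul (2 * c)
  set qb : ℝ → F := fun t => Real.cos (θ t) • q₀ + Real.sin (θ t) • p₀ with hqb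
  set pb : ℝ → F := fun t => (-Real.sin (θ t)) • q₀ + Real.cos (θ t) • p₀ with hpb
  have hnorm : ∀ t : ℝ, ‖qb t‖ ^ 2 + ‖pb t‖ ^ 2 = r₀ ^ 2 := by
    intro t
    have h1 : ‖qb t‖ ^ 2 = ‖Real.cos (θ t) • q₀‖ ^ 2 +
        2 * inner ℝ (Real.cos (θ t) • q₀) (Real.sin (θ t) • p₀) + ‖Real.sin (θ t) • p₀‖ ^ 2 :=
      norm_add_sq_real _ _
    have h2 : ‖pb t‖ ^ 2 = ‖(-Real.sin (θ t)) • q₀‖ ^ 2 +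
        2 * inner ℝ ((-Real.sin (θ t)) • q₀) (Real.cos (θ t) • p₀) + ‖Real.cos (θ t) • p₀‖ ^ 2 :=
      norm_add_sq_real _ _
    rw [h1, h2, hr]
    simp only [norm_smul, real_inner_smul_left, real_inner_smul_right, Real.norm_eq_abs,
      mul_pow, sq_abs]
    nlinarith [Real.sin_sq_add_cos_sq (θ t)]
  refine ⟨fun t => t * a, fun _ => 0, qb, pb, ?_, ?_, ?_, ?_, ?_, ?_, ?_, ?_, ?_, ?_, hnorm⟩
  · intro t
    rw [hnorm t, hχp, one_mul, ← ha]
    simpa using (hasDerivAt_id t).mul_const a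
  · intro t
    rw [hnorm t, hχq, zero_mul, neg_zero]
    exact hasDerivAt_const t 0
  · intro t
    have hcos : HasDerivAt (fun t => Real.cos (θ t)) (-Real.sin (θ t) * (2 * c * f t)) t :=
      (Real.hasDerivAt_cos (θ t)).comp t (hθd t)
    have hsin : HasDerivAt (fun t => Real.sin (θ t)) (Real.cos (θ t) * (2 * c * f t)) t :=
      (Real.hasDerivAt_sin (θ t)).comp t (hθd t)
    have h := (hcos.smul_const q₀).add (hsin.smul_const p₀)
    have heq : (-Real.sin (θ t) * (2 * c * f t)) • q₀ + (Real.cos (θ t) * (2 * c * f t)) • p₀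
        = (2 * χ (t * a) 0 * c) • pb t := by
      rw [hpb]; simp only [smul_add, smul_smul, hf]; module
    rw [heq] at h
    rw [hnorm t, ← hc]
    exact h
  · intro t
    have hcos : HasDerivAt (fun t => Real.cos (θ t)) (-Real.sin (θ t) * (2 * c * f t)) t :=
      (Real.hasDerivAt_cos (θ t)).comp t (hθd t)
    have hsin : HasDerivAt (fun t => Real.sin (θ t)) (Real.cos (θ t) * (2 * c * f t)) t :=
      (Real.hasDerivAt_sin (θ t)).comp t (hθd t)
    have h := ((hsin.neg).smul_const q₀).add (hcos.smul_const p₀)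
    have heq : (-(Real.cos (θ t) * (2 * c * f t))) • q₀ + (-Real.sin (θ t) * (2 * c * f t)) • p₀
        = -((2 * χ (t * a) 0 * c) • qb t) := by
      rw [hqb]; simp only [smul_add, smul_smul, hf, neg_add, ← neg_smul]; module
    rw [heq] at h
    rw [hnorm t, ← hc]
    exact h
  · simp
  · rfl
  · simp [hqb, hθ]
  · simp [hpb, hθ]
  · intro t; rfl
  · intro t; rfl
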